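/- Let W be a Banach representation of a p-adic Lie group G with a fixed exhaustive decreasing sequence of open subgroups Γ_m. If w ∈ W is a locally analytic vector, then for all sufficiently large m, the Γ_m-analytic norm of w equals its Banach norm: ‖w‖_{Γ_m} = ‖w‖. -/

import Mathlib

open Filter

set_option maxHeartbeats 1600000
set_option linter.unusedSectionVars false
set_option linter.unusedVariables false

section Helpers

variable {p : ℕ} [Fact p.Prime] {W : Type*} [NormedAddCommGroup W] [NormedSpace ℚ_[p] W]
  [CompleteSpace W]

lemma padicCoe_continuous : Continuous ((↑) : ℤ_[p] → ℚ_[p]) := continuous_subtype_val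

lemma norm_coe_smul_le' (t : ℤ_[p]) (x : W) : ‖((t : ℚ_[p])) • x‖ ≤ ‖x‖ := by
  rw [norm_smul, PadicInt.padic_norm_e_of_padicInt]
  exact mul_le_of_le_one_left (norm_nonneg _) t.norm_le_one

/-- boundedness from cofinite convergence to 0 -/
lemma bound_of_tendsto {ι : Type*} (a : ι → W) (h : Tendsto a cofinite (nhds 0)) :
    ∃ C : ℝ, 0 ≤ C ∧ ∀ k, ‖a k‖ ≤ C := by
  have h1 : ∀ᶠ k in cofinite, ‖a k‖ < 1 := by
    have := h (Metric.ball_mem_nhds 0 one_pos)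
    filter_upwards [this] with k hk
    simpa [dist_eq_norm] using hk
  have hfin : {k | ¬ ‖a k‖ < 1}.Finite := h1
  refine ⟨1 + ∑ k ∈ hfin.toFinset, ‖a k‖, by positivity, fun k => ?_⟩
  by_cases hk : ‖a k‖ < 1
  · have : (0:ℝ) ≤ ∑ k ∈ hfin.toFinset, ‖a k‖ :=
      Finset.sum_nonneg fun _ _ => norm_nonneg _
    linarith
  · have hk' : k ∈ hfin.toFinset := by simpa using hk
    have := Finset.single_le_sum (f := fun k => ‖a k‖)
      (fun i _ => norm_nonneg _) hk'
    linarith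

/-- summability of multi-geometric series -/
lemma summable_geom_pi (d : ℕ) {r : ℝ} (h0 : 0 ≤ r) (h1 : r < 1) :
    Summable (fun k : Fin d → ℕ => ∏ i, r ^ k i) := by
  induction d with
  | zero => exact Summable.of_finite
  | succ d IH =>
    have h2 : Summable (fun q : ℕ × (Fin d → ℕ) => r ^ q.1 * ∏ i, r ^ q.2 i) :=
      by
        apply Summable.mul_of_nonneg (summable_geometric_of_lt_one h0 h1) IH
        · intro m; exact pow_nonneg h0 m
        · intro k; exact Finset.prod_nonneg fun i _ => pow_nonneg h0 _
    have h3 := ((Fin.consEquiv (fun _ : Fin (d+1) => ℕ)).symm.summable_iff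
      (f := fun q : ℕ × (Fin d → ℕ) => r ^ q.1 * ∏ i, r ^ q.2 i)).mpr h2
    refine h3.congr fun k => ?_
    simp only [Function.comp_apply, Fin.consEquiv_symm_apply, Fin.prod_univ_succ, Fin.tail]

/-- One-variable uniqueness of power series coefficients on ℤ_p. -/
lemma onevar_unique (b : ℕ → W) (hs : Summable fun m => ‖b m‖)
    (h : ∀ t : ℤ_[p], ∑' m, ((t ^ m : ℤ_[p]) : ℚ_[p]) • b m = 0) : ∀ m, b m = 0 := by
  intro m
  induction m using Nat.strong_induction_on with
  | _ n IH =>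
  have hs' : Summable fun m => ‖b (n + m)‖ := by
    have : Summable fun m => ‖b ((fun j => n + j) m)‖ :=
      hs.comp_injective (add_right_injective n)
    exact this
  have hgsum : ∀ t : ℤ_[p], Summable (fun m => ((t ^ m : ℤ_[p]) : ℚ_[p]) • b (n + m)) := by
    intro t
    apply Summable.of_norm_bounded hs'
    intro m
    exact norm_coe_smul_le' _ _
  set g : ℤ_[p] → W := fun t => ∑' m, ((t ^ m : ℤ_[p]) : ℚ_[p]) • b (n + m) with hg
  have key : ∀ t : ℤ_[p], t ≠ 0 → g t = 0 := by
    intro t ht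
    have h1 : ((t ^ n : ℤ_[p]) : ℚ_[p]) • g t = 0 := by
      rw [hg, ← Summable.tsum_const_smul _ (hgsum t)]
      have h2 : ∀ m : ℕ, ((t ^ n : ℤ_[p]) : ℚ_[p]) • (((t ^ m : ℤ_[p]) : ℚ_[p]) • b (n + m))
          = ((t ^ (n + m) : ℤ_[p]) : ℚ_[p]) • b (n + m) := by
        intro m
        rw [smul_smul, pow_add]
        push_cast
        ring_nf
      rw [tsum_congr h2]
      have h3 : ∀ m ∉ Set.range (fun j => n + j),
          ((t ^ m : ℤ_[p]) : ℚ_[p]) • b m = 0 := by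
        intro m hm
        have hmn : m < n := by
          by_contra hc
          exact hm ⟨m - n, show n + (m - n) = m by omega⟩
        rw [IH m hmn, smul_zero]
      have h4 := Function.Injective.tsum_eq (g := fun j => n + j)
        (add_right_injective n)
        (f := fun m => ((t ^ m : ℤ_[p]) : ℚ_[p]) • b m)
        (Function.support_subset_iff'.mpr h3)
      rw [h4]
      exact h t
    have htn : ((t ^ n : ℤ_[p]) : ℚ_[p]) ≠ 0 := by
      rw [PadicInt.coe_pow]
      exact pow_ne_zero _ (PadicInt.coe_ne_zero.mpr ht)
    exact (smul_eq_zero.mp h1).resolve_left htn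
  have hcont : Continuous g := by
    apply continuous_tsum (u := fun m => ‖b (n + m)‖) _ hs'
    · intro m t
      exact norm_coe_smul_le' _ _
    · intro m
      have hcoe : Continuous ((↑) : ℤ_[p] → ℚ_[p]) := continuous_subtype_val
      exact ((hcoe.comp (continuous_pow (M := ℤ_[p]) m)).smul continuous_const)
  have hg0 : g 0 = b n := by
    have hge : g 0 = ∑' m, (((0:ℤ_[p]) ^ m : ℤ_[p]) : ℚ_[p]) • b (n + m) := rfl
    rw [hge, tsum_eq_single 0]
    · norm_num
    · intro m hm
      rw [zero_pow hm]
      norm_num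
  have hlim : Tendsto (fun j : ℕ => g ((p : ℤ_[p]) ^ j)) atTop (nhds (g 0)) := by
    apply (hcont.tendsto 0).comp
    apply tendsto_pow_atTop_nhds_zero_of_norm_lt_one
    rw [PadicInt.norm_p]
    have hp := (Fact.out : p.Prime).one_lt
    rw [inv_lt_one_iff₀]
    right
    exact_mod_cast hp
  have hz : ∀ j : ℕ, g ((p : ℤ_[p]) ^ j) = 0 := by
    intro j
    apply key
    apply pow_ne_zero
    exact_mod_cast (Fact.out : p.Prime).ne_zero
  rw [← hg0]
  have : Tendsto (fun _ : ℕ => (0 : W)) atTop (nhds (g 0)) := by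
    simpa [hz] using hlim
  exact tendsto_nhds_unique this tendsto_const_nhds

/-- Multivariable uniqueness of power series coefficients on ℤ_p^d. -/
lemma multivar_unique : ∀ (d : ℕ) (e : (Fin d → ℕ) → W),
    (Summable fun k => ‖e k‖) →
    (∀ y : Fin d → ℤ_[p], ∑' k : Fin d → ℕ, ((∏ i, y i ^ k i : ℤ_[p]) : ℚ_[p]) • e k = 0) →
    ∀ k, e k = 0 := by
  intro d
  induction d with
  | zero =>
    intro e _ h k
    have h0 := h (fun _ => 0)
    rw [tsum_eq_single (fun _ => 0)] at h0
    · have : k = fun _ => 0 := funext fun i => i.elim0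
      rw [this]
      simpa using h0
    · intro k' hk'
      exact absurd (funext fun i => i.elim0) hk'
  | succ d IH =>
    intro e hs h k
    set E := Fin.consEquiv (fun _ : Fin (d+1) => ℕ) with hE
    -- summability of norms over the product type
    have hsE : Summable fun q : ℕ × (Fin d → ℕ) => ‖e (Fin.cons q.1 q.2)‖ := by
      have := (E.summable_iff (f := fun k => ‖e k‖)).mpr hs
      exact this
    have hinj : ∀ m : ℕ, Function.Injective
        (fun k' : Fin d → ℕ => ((m, k') : ℕ × (Fin d → ℕ))) := by
      intro m k1 k2 h12
      exact congrArg Prod.snd h12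
    have hfib : ∀ m : ℕ, Summable fun k' : Fin d → ℕ => ‖e (Fin.cons m k')‖ := by
      intro m
      exact hsE.comp_injective (hinj m)
    -- the key: for each fixed y', the ℕ-indexed coefficients vanish
    have key : ∀ (y' : Fin d → ℤ_[p]) (m : ℕ),
        ∑' k' : Fin d → ℕ, ((∏ i, y' i ^ k' i : ℤ_[p]) : ℚ_[p]) • e (Fin.cons m k') = 0 := by
      intro y'
      apply onevar_unique (p := p)
      · -- summability of the norms of the inner sums
        have hu : Summable fun m : ℕ => ∑' k' : Fin d → ℕ, ‖e (Fin.cons m k')‖ := by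
          have := (summable_prod_of_nonneg
            (f := fun q : ℕ × (Fin d → ℕ) => ‖e (Fin.cons q.1 q.2)‖)
            (fun q => norm_nonneg _)).mp hsE
          exact this.2
        apply Summable.of_nonneg_of_le (fun m => norm_nonneg _) _ hu
        intro m
        calc ‖∑' k' : Fin d → ℕ, ((∏ i, y' i ^ k' i : ℤ_[p]) : ℚ_[p]) • e (Fin.cons m k')‖
            ≤ ∑' k' : Fin d → ℕ, ‖((∏ i, y' i ^ k' i : ℤ_[p]) : ℚ_[p]) • e (Fin.cons m k')‖ :=
              norm_tsum_le_tsum_norm ((hfib m).of_nonneg_of_le (fun _ => norm_nonneg _)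
                (fun k' => norm_coe_smul_le' _ _))
          _ ≤ ∑' k' : Fin d → ℕ, ‖e (Fin.cons m k')‖ :=
              Summable.tsum_le_tsum (fun k' => norm_coe_smul_le' _ _)
                ((hfib m).of_nonneg_of_le (fun _ => norm_nonneg _)
                  (fun k' => norm_coe_smul_le' _ _)) (hfib m)
      · -- the vanishing hypothesis for the one-variable lemma
        intro t
        -- the full function on Fin (d+1) → ℕ
        set F : (Fin (d+1) → ℕ) → W :=
          fun k => ((∏ i, (Fin.cons t y' : Fin (d+1) → ℤ_[p]) i ^ k i : ℤ_[p]) : ℚ_[p]) • e k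
          with hF
        have hFsum : Summable F := by
          apply Summable.of_norm_bounded hs
          intro k
          exact norm_coe_smul_le' _ _
        have hscal : ∀ (m : ℕ) (k' : Fin d → ℕ),
            F (Fin.cons m k') = ((t ^ m : ℤ_[p]) : ℚ_[p]) •
              (((∏ i, y' i ^ k' i : ℤ_[p]) : ℚ_[p]) • e (Fin.cons m k')) := by
          intro m k'
          have hpr : (∏ i, (Fin.cons t y' : Fin (d+1) → ℤ_[p]) i ^
              (Fin.cons m k' : Fin (d+1) → ℕ) i : ℤ_[p]) = t ^ m * ∏ i, y' i ^ k' i := by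
            rw [Fin.prod_univ_succ]
            simp [Fin.cons_zero, Fin.cons_succ]
          rw [hF]
          show ((∏ i, (Fin.cons t y' : Fin (d+1) → ℤ_[p]) i ^
              (Fin.cons m k' : Fin (d+1) → ℕ) i : ℤ_[p]) : ℚ_[p]) • e (Fin.cons m k') = _
          rw [hpr, PadicInt.coe_mul, mul_smul]
        calc ∑' m : ℕ, ((t ^ m : ℤ_[p]) : ℚ_[p]) •
              (∑' k' : Fin d → ℕ, ((∏ i, y' i ^ k' i : ℤ_[p]) : ℚ_[p]) • e (Fin.cons m k'))
            = ∑' m : ℕ, ∑' k' : Fin d → ℕ, F (Fin.cons m k') := by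
              apply tsum_congr
              intro m
              rw [← Summable.tsum_const_smul _ ((Summable.of_norm_bounded (hfib m)
                (fun k' => norm_coe_smul_le' _ _)) :
                Summable fun k' : Fin d → ℕ => ((∏ i, y' i ^ k' i : ℤ_[p]) : ℚ_[p]) • e (Fin.cons m k'))]
              exact tsum_congr fun k' => (hscal m k').symm
          _ = ∑' q : ℕ × (Fin d → ℕ), F (E q) := by
              have hsum2 : Summable (fun q : ℕ × (Fin d → ℕ) => F (E q)) :=
                (E.summable_iff (f := F)).mpr hFsum
              conv_rhs => rw [Summable.tsum_prod' hsum2 (fun m => hsum2.comp_injective (hinj m))]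
              rfl
          _ = ∑' k : Fin (d+1) → ℕ, F k := E.tsum_eq F
          _ = 0 := h (Fin.cons t y')
    -- apply IH for each m
    have hzero : ∀ (m : ℕ) (k' : Fin d → ℕ), e (Fin.cons m k') = 0 := by
      intro m
      apply IH (fun k' => e (Fin.cons m k')) (hfib m)
      intro y'
      exact key y' m
    have : k = Fin.cons (k 0) (Fin.tail k) := (Fin.cons_self_tail k).symm
    rw [this]
    exact hzero (k 0) (Fin.tail k)

end Helpers

section Main

variable {p d : ℕ} [Fact p.Prime]
    {G : Type*} [Group G]
    {W : Type*} [NormedAddCommGroup W] [NormedSpace ℚ_[p] W] [CompleteSpace W]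
    [DistribMulAction G W]


/-- iterated scaling -/
lemma scale_iter (Γ : ℕ → Subgroup G) (hdec : ∀ n, Γ (n + 1) ≤ Γ n)
    (c : ∀ n, Γ n → (Fin d → ℤ_[p]))
    (hscale : ∀ (n : ℕ) (g : Γ (n + 1)),
      c n ⟨(g : G), hdec n g.2⟩ = fun i => (p : ℤ_[p]) * c (n + 1) g i)
    (hle : ∀ {m n : ℕ}, m ≤ n → Γ n ≤ Γ m) :
    ∀ (m n : ℕ) (h : m ≤ n) (g : Γ n),
      c m ⟨(g : G), hle h g.2⟩ = fun i => (p : ℤ_[p]) ^ (n - m) * c n g i := by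
  intro m n h
  induction n, h using Nat.le_induction with
  | base =>
    intro g
    simp only [Nat.sub_self, pow_zero, one_mul]
  | succ n hmn IH =>
    intro g
    have hg' : (g : G) ∈ Γ n := hdec n g.2
    have h1 : c m ⟨(g : G), hle (le_trans hmn (Nat.le_succ n)) g.2⟩
        = c m ⟨((⟨(g : G), hg'⟩ : Γ n) : G), hle hmn hg'⟩ := rfl
    rw [h1, IH ⟨(g : G), hg'⟩]
    have h2 : c n ⟨(g : G), hg'⟩ = fun i => (p : ℤ_[p]) * c (n + 1) g i := hscale n g
    funext i
    rw [h2]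
    have h3 : n + 1 - m = (n - m) + 1 := by omega
    rw [h3, pow_succ]
    ring

/-- KEY: relation between expansions at two levels -/
lemma key_lemma (Γ : ℕ → Subgroup G) (hdec : ∀ n, Γ (n + 1) ≤ Γ n)
    (c : ∀ n, Γ n → (Fin d → ℤ_[p])) (hcbij : ∀ n, Function.Bijective (c n))
    (hscale : ∀ (n : ℕ) (g : Γ (n + 1)),
      c n ⟨(g : G), hdec n g.2⟩ = fun i => (p : ℤ_[p]) * c (n + 1) g i)
    (w : W) {n₀ n : ℕ} (hn : n₀ + 1 ≤ n)
    (b : (Fin d → ℕ) → W) (hb0 : Tendsto b cofinite (nhds 0))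
    (hb : ∀ g : Γ n₀, (g : G) • w = ∑' k : Fin d → ℕ, ((∏ i, c n₀ g i ^ k i : ℤ_[p]) : ℚ_[p]) • b k)
    (a : (Fin d → ℕ) → W) (ha0 : Tendsto a cofinite (nhds 0))
    (ha : ∀ g : Γ n, (g : G) • w = ∑' k : Fin d → ℕ, ((∏ i, c n g i ^ k i : ℤ_[p]) : ℚ_[p]) • a k) :
    ∀ k, a k = ((p : ℚ_[p]) ^ ((n - n₀) * ∑ i, k i)) • b k := by
  have hle : ∀ {m n : ℕ}, m ≤ n → Γ n ≤ Γ m := fun h => antitone_nat_of_succ_le hdec h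
  have hp1 : (1 : ℝ) < p := by exact_mod_cast (Fact.out : p.Prime).one_lt
  have hrpos : (0:ℝ) ≤ (p:ℝ)⁻¹ := by positivity
  have hrlt : ((p:ℝ))⁻¹ < 1 := inv_lt_one_of_one_lt₀ hp1
  obtain ⟨A, hA0, hA⟩ := bound_of_tendsto a ha0
  obtain ⟨B, hB0, hB⟩ := bound_of_tendsto b hb0
  have hnormp : ∀ m : ℕ, ‖((p : ℚ_[p]) ^ m)‖ = ((p:ℝ)⁻¹) ^ m := by
    intro m
    rw [norm_pow, Padic.norm_p]
  set s : ℕ := n + 1 - n₀ with hs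
  set e : (Fin d → ℕ) → W := fun k =>
    ((p : ℚ_[p]) ^ (∑ i, k i)) • a k - ((p : ℚ_[p]) ^ (s * ∑ i, k i)) • b k with he
  -- bounds
  have h1bd : ∀ k : Fin d → ℕ, ‖((p : ℚ_[p]) ^ (∑ i, k i)) • a k‖
      ≤ A * ∏ i, ((p:ℝ)⁻¹) ^ k i := by
    intro k
    rw [norm_smul, hnormp, Finset.prod_pow_eq_pow_sum, mul_comm]
    exact mul_le_mul_of_nonneg_right (hA k) (by positivity)
  have h2bd : ∀ k : Fin d → ℕ, ‖((p : ℚ_[p]) ^ (s * ∑ i, k i)) • b k‖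
      ≤ B * ∏ i, ((p:ℝ)⁻¹) ^ k i := by
    intro k
    rw [norm_smul, hnormp, Finset.prod_pow_eq_pow_sum]
    calc ((p:ℝ)⁻¹) ^ (s * ∑ i, k i) * ‖b k‖
        ≤ ((p:ℝ)⁻¹) ^ (∑ i, k i) * B := by
          apply mul_le_mul _ (hB k) (norm_nonneg _) (by positivity)
          apply pow_le_pow_of_le_one hrpos hrlt.le
          calc ∑ i, k i = 1 * ∑ i, k i := (one_mul _).symm
            _ ≤ s * ∑ i, k i := Nat.mul_le_mul_right _ (by omega)
      _ = B * ((p:ℝ)⁻¹) ^ (∑ i, k i) := mul_comm _ _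
  have hgeo := summable_geom_pi d hrpos hrlt
  have hes : Summable fun k => ‖e k‖ := by
    apply Summable.of_nonneg_of_le (fun k => norm_nonneg _) _ (hgeo.mul_left (A + B))
    intro k
    calc ‖e k‖ ≤ ‖((p : ℚ_[p]) ^ (∑ i, k i)) • a k‖ + ‖((p : ℚ_[p]) ^ (s * ∑ i, k i)) • b k‖ :=
          norm_sub_le _ _
      _ ≤ A * ∏ i, ((p:ℝ)⁻¹) ^ k i + B * ∏ i, ((p:ℝ)⁻¹) ^ k i := add_le_add (h1bd k) (h2bd k)
      _ = (A + B) * ∏ i, ((p:ℝ)⁻¹) ^ k i := (add_mul _ _ _).symm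
  -- vanishing
  have hvan : ∀ y : Fin d → ℤ_[p],
      ∑' k : Fin d → ℕ, ((∏ i, y i ^ k i : ℤ_[p]) : ℚ_[p]) • e k = 0 := by
    intro y
    obtain ⟨g, hg⟩ := (hcbij (n + 1)).2 y
    -- coordinates of g at levels n and n₀
    have hcn : c n ⟨(g : G), hdec n g.2⟩ = fun i => (p : ℤ_[p]) * y i := by
      rw [hscale n g, hg]
    have hmem0 : (g : G) ∈ Γ n₀ := hle (by omega : n₀ ≤ n + 1) g.2
    have hcn0 : c n₀ ⟨(g : G), hmem0⟩ = fun i => (p : ℤ_[p]) ^ s * y i := by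
      have := scale_iter Γ hdec c hscale (fun h => hle h) n₀ (n + 1) (by omega) g
      rw [hg] at this
      exact this
    -- scalar computations
    have hyn : ∀ k : Fin d → ℕ,
        ((∏ i, ((p : ℤ_[p]) * y i) ^ k i : ℤ_[p]) : ℚ_[p])
        = ((∏ i, y i ^ k i : ℤ_[p]) : ℚ_[p]) * ((p : ℚ_[p]) ^ (∑ i, k i)) := by
      intro k
      have hz : (∏ i, ((p : ℤ_[p]) * y i) ^ k i : ℤ_[p])
          = (∏ i, y i ^ k i) * (p : ℤ_[p]) ^ (∑ i, k i) := by
        rw [← Finset.prod_pow_eq_pow_sum, ← Finset.prod_mul_distrib]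
        exact Finset.prod_congr rfl fun i _ => by rw [mul_pow]; ring
      rw [hz, PadicInt.coe_mul, PadicInt.coe_pow, PadicInt.coe_natCast]
    have hyn0 : ∀ k : Fin d → ℕ,
        ((∏ i, ((p : ℤ_[p]) ^ s * y i) ^ k i : ℤ_[p]) : ℚ_[p])
        = ((∏ i, y i ^ k i : ℤ_[p]) : ℚ_[p]) * ((p : ℚ_[p]) ^ (s * ∑ i, k i)) := by
      intro k
      have hz : (∏ i, ((p : ℤ_[p]) ^ s * y i) ^ k i : ℤ_[p])
          = (∏ i, y i ^ k i) * (p : ℤ_[p]) ^ (s * ∑ i, k i) := by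
        calc (∏ i, ((p : ℤ_[p]) ^ s * y i) ^ k i : ℤ_[p])
            = ∏ i, ((p : ℤ_[p]) ^ (s * k i) * y i ^ k i) := by
              apply Finset.prod_congr rfl
              intro i _
              rw [mul_pow, ← pow_mul]
          _ = (∏ i, (p : ℤ_[p]) ^ (s * k i)) * ∏ i, y i ^ k i := Finset.prod_mul_distrib
          _ = (p : ℤ_[p]) ^ (∑ i, s * k i) * ∏ i, y i ^ k i := by
              rw [Finset.prod_pow_eq_pow_sum]
          _ = (∏ i, y i ^ k i) * (p : ℤ_[p]) ^ (s * ∑ i, k i) := by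
              rw [← Finset.mul_sum]
              ring
      rw [hz, PadicInt.coe_mul, PadicInt.coe_pow, PadicInt.coe_natCast]
    -- the two summable series
    have hsum1 : Summable fun k : Fin d → ℕ =>
        ((∏ i, y i ^ k i : ℤ_[p]) : ℚ_[p]) • (((p : ℚ_[p]) ^ (∑ i, k i)) • a k) := by
      apply Summable.of_norm_bounded (hgeo.mul_left A)
      intro k
      exact le_trans (norm_coe_smul_le' _ _) (h1bd k)
    have hsum2 : Summable fun k : Fin d → ℕ =>
        ((∏ i, y i ^ k i : ℤ_[p]) : ℚ_[p]) • (((p : ℚ_[p]) ^ (s * ∑ i, k i)) • b k) := by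
      apply Summable.of_norm_bounded (hgeo.mul_left B)
      intro k
      exact le_trans (norm_coe_smul_le' _ _) (h2bd k)
    -- evaluate both expansions at g
    have hexp1 : (g : G) • w = ∑' k : Fin d → ℕ,
        ((∏ i, y i ^ k i : ℤ_[p]) : ℚ_[p]) • (((p : ℚ_[p]) ^ (∑ i, k i)) • a k) := by
      rw [ha ⟨(g : G), hdec n g.2⟩]
      apply tsum_congr
      intro k
      rw [hcn]
      show ((∏ i, ((p : ℤ_[p]) * y i) ^ k i : ℤ_[p]) : ℚ_[p]) • a k = _
      rw [hyn k, mul_smul]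
    have hexp2 : (g : G) • w = ∑' k : Fin d → ℕ,
        ((∏ i, y i ^ k i : ℤ_[p]) : ℚ_[p]) • (((p : ℚ_[p]) ^ (s * ∑ i, k i)) • b k) := by
      rw [hb ⟨(g : G), hmem0⟩]
      apply tsum_congr
      intro k
      rw [hcn0]
      show ((∏ i, ((p : ℤ_[p]) ^ s * y i) ^ k i : ℤ_[p]) : ℚ_[p]) • b k = _
      rw [hyn0 k, mul_smul]
    calc ∑' k : Fin d → ℕ, ((∏ i, y i ^ k i : ℤ_[p]) : ℚ_[p]) • e k
        = ∑' k : Fin d → ℕ,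
          (((∏ i, y i ^ k i : ℤ_[p]) : ℚ_[p]) • (((p : ℚ_[p]) ^ (∑ i, k i)) • a k)
          - ((∏ i, y i ^ k i : ℤ_[p]) : ℚ_[p]) • (((p : ℚ_[p]) ^ (s * ∑ i, k i)) • b k)) := by
          apply tsum_congr
          intro k
          rw [he]
          show ((∏ i, y i ^ k i : ℤ_[p]) : ℚ_[p]) •
            (((p : ℚ_[p]) ^ (∑ i, k i)) • a k - ((p : ℚ_[p]) ^ (s * ∑ i, k i)) • b k) = _
          rw [smul_sub]
      _ = (∑' k : Fin d → ℕ,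
            ((∏ i, y i ^ k i : ℤ_[p]) : ℚ_[p]) • (((p : ℚ_[p]) ^ (∑ i, k i)) • a k))
          - ∑' k : Fin d → ℕ,
            ((∏ i, y i ^ k i : ℤ_[p]) : ℚ_[p]) • (((p : ℚ_[p]) ^ (s * ∑ i, k i)) • b k) :=
          Summable.tsum_sub hsum1 hsum2
      _ = (g : G) • w - (g : G) • w := by rw [← hexp1, ← hexp2]
      _ = 0 := sub_self _
  -- apply uniqueness
  have hzero := multivar_unique d e hes hvan
  intro k
  have hek := hzero k
  rw [he] at hek
  have h5 : ((p : ℚ_[p]) ^ (∑ i, k i)) • a k = ((p : ℚ_[p]) ^ (s * ∑ i, k i)) • b k :=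
    sub_eq_zero.mp hek
  have h6 : s * ∑ i, k i = (∑ i, k i) + (n - n₀) * ∑ i, k i := by
    have : s = (n - n₀) + 1 := by omega
    rw [this]
    ring
  rw [h6, pow_add, mul_smul] at h5
  have hne : ((p : ℚ_[p]) ^ (∑ i, k i)) ≠ 0 := by
    apply pow_ne_zero
    exact_mod_cast (Nat.cast_ne_zero (R := ℚ_[p])).mpr (Fact.out : p.Prime).ne_zero
  exact smul_right_injective W hne h5

end Main

/-- If `w` is a locally analytic vector of a Banach representation `W` of a
`p`-adic Lie group `G` with a decreasing basis `Γ_m` of open subgroups (with compatible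
`ℤ_p^d`-coordinates `c_m` sending `1` to `0`, scaled by `p` from one level to the next), then
for all sufficiently large `m`, the `Γ_m`-analytic norm of `w` (the sup of the norms of the
coefficients of any `Γ_m`-analytic expansion of `w`) equals the Banach norm `‖w‖`. -/
theorem statement6 (p d : ℕ) [Fact p.Prime]
    (G : Type*) [Group G]
    (W : Type*) [NormedAddCommGroup W] [NormedSpace ℚ_[p] W] [CompleteSpace W]
    [DistribMulAction G W] (hiso : ∀ (g : G) (x : W), ‖g • x‖ = ‖x‖)
    (Γ : ℕ → Subgroup G) (hdec : ∀ n, Γ (n + 1) ≤ Γ n)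
    (c : ∀ n, Γ n → (Fin d → ℤ_[p])) (hcbij : ∀ n, Function.Bijective (c n))
    (hc1 : ∀ n, c n 1 = 0)
    (hscale : ∀ (n : ℕ) (g : Γ (n + 1)),
      c n ⟨(g : G), hdec n g.2⟩ = fun i => (p : ℤ_[p]) * c (n + 1) g i)
    (w : W)
    (hw : ∃ n, ∃ a : (Fin d → ℕ) → W, Filter.Tendsto a Filter.cofinite (nhds 0) ∧
      ∀ g : Γ n, (g : G) • w = ∑' k : Fin d → ℕ, ((∏ i, c n g i ^ k i : ℤ_[p]) : ℚ_[p]) • a k) :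
    ∃ M : ℕ, ∀ n, M ≤ n → ∀ a : (Fin d → ℕ) → W,
      Filter.Tendsto a Filter.cofinite (nhds 0) →
      (∀ g : Γ n, (g : G) • w =
        ∑' k : Fin d → ℕ, ((∏ i, c n g i ^ k i : ℤ_[p]) : ℚ_[p]) • a k) →
      (⨆ k : Fin d → ℕ, ‖a k‖) = ‖w‖ := by
  obtain ⟨n₀, b, hb0, hb⟩ := hw
  have hp1 : (1 : ℝ) < p := by exact_mod_cast (Fact.out : p.Prime).one_lt
  have hppos : (0:ℝ) < p := lt_trans one_pos hp1
  have hrpos : (0:ℝ) ≤ (p:ℝ)⁻¹ := by positivity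
  have hrlt : ((p:ℝ))⁻¹ < 1 := inv_lt_one_of_one_lt₀ hp1
  -- `a 0 = w` for any valid expansion at any level
  have ha0w : ∀ (n : ℕ) (a : (Fin d → ℕ) → W),
      (∀ g : Γ n, (g : G) • w =
        ∑' k : Fin d → ℕ, ((∏ i, c n g i ^ k i : ℤ_[p]) : ℚ_[p]) • a k) →
      a (fun _ => 0) = w := by
    intro n a ha
    have h1 := ha 1
    rw [OneMemClass.coe_one, one_smul, hc1 n] at h1
    rw [h1, tsum_eq_single (fun _ => 0)]
    · simp
    · intro k hk
      obtain ⟨i, hi⟩ := Function.ne_iff.mp hk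
      have : (∏ j, (0 : Fin d → ℤ_[p]) j ^ k j) = 0 :=
        Finset.prod_eq_zero (Finset.mem_univ i) (by simp [zero_pow hi])
      rw [this]
      simp
  by_cases hw0 : w = 0
  · refine ⟨n₀ + 1, fun n hn a ha0 ha => ?_⟩
    have hzb : ∀ g : Γ n₀, (g : G) • w =
        ∑' k : Fin d → ℕ, ((∏ i, c n₀ g i ^ k i : ℤ_[p]) : ℚ_[p]) • (0 : W) := by
      intro g
      rw [hw0, smul_zero]
      simp
    have hrel := key_lemma Γ hdec c hcbij hscale w hn (fun _ => 0)
      tendsto_const_nhds hzb a ha0 ha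
    have hz : ∀ k, a k = 0 := fun k => by rw [hrel k, smul_zero]
    rw [hw0]
    simp only [hz, norm_zero, ciSup_const]
  · have hwpos : 0 < ‖w‖ := norm_pos_iff.mpr hw0
    obtain ⟨C, hC0, hC⟩ := bound_of_tendsto b hb0
    obtain ⟨j, hj⟩ := pow_unbounded_of_one_lt (C / ‖w‖) hp1
    have hCj : C ≤ ‖w‖ * (p:ℝ) ^ j := by
      rw [div_lt_iff₀ hwpos] at hj
      nlinarith
    refine ⟨n₀ + 1 + j, fun n hn a ha0 ha => ?_⟩
    have hn' : n₀ + 1 ≤ n := by omega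
    have hrel := key_lemma Γ hdec c hcbij hscale w hn' b hb0 hb a ha0 ha
    have haw := ha0w n a ha
    have hbound : ∀ k, ‖a k‖ ≤ ‖w‖ := by
      intro k
      by_cases hk : k = fun _ => 0
      · rw [hk, haw]
      · have hks : 1 ≤ ∑ i, k i := by
          rcases Nat.eq_zero_or_pos (∑ i, k i) with h0 | h0
          · exfalso
            apply hk
            funext i
            exact Finset.sum_eq_zero_iff.mp h0 i (Finset.mem_univ i)
          · exact h0
        have hexp : j + 1 ≤ (n - n₀) * ∑ i, k i := by
          calc j + 1 ≤ n - n₀ := by omega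
            _ = (n - n₀) * 1 := (mul_one _).symm
            _ ≤ (n - n₀) * ∑ i, k i := Nat.mul_le_mul_left _ hks
        rw [hrel k, norm_smul, norm_pow, Padic.norm_p]
        calc ((p:ℝ)⁻¹) ^ ((n - n₀) * ∑ i, k i) * ‖b k‖
            ≤ ((p:ℝ)⁻¹) ^ (j + 1) * (‖w‖ * (p:ℝ) ^ j) := by
              apply mul_le_mul _ (le_trans (hC k) hCj) (norm_nonneg _) (by positivity)
              exact pow_le_pow_of_le_one hrpos hrlt.le hexp
          _ = ‖w‖ * ((p:ℝ))⁻¹ := by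
              have hpi : (p:ℝ)⁻¹ * (p:ℝ) = 1 := inv_mul_cancel₀ hppos.ne'
              calc ((p:ℝ)⁻¹) ^ (j + 1) * (‖w‖ * (p:ℝ) ^ j)
                  = ‖w‖ * (p:ℝ)⁻¹ * ((p:ℝ)⁻¹ * (p:ℝ)) ^ j := by ring
                _ = ‖w‖ * (p:ℝ)⁻¹ := by rw [hpi, one_pow, mul_one]
          _ ≤ ‖w‖ * 1 := by
              apply mul_le_mul_of_nonneg_left hrlt.le (norm_nonneg _)
          _ = ‖w‖ := mul_one _
    apply le_antisymm
    · exact ciSup_le hbound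
    · have hbdd : BddAbove (Set.range fun k : Fin d → ℕ => ‖a k‖) := by
        refine ⟨‖w‖, ?_⟩
        rintro x ⟨k, rfl⟩
        exact hbound k
      calc ‖w‖ = ‖a (fun _ => 0)‖ := by rw [haw]
        _ ≤ ⨆ k : Fin d → ℕ, ‖a k‖ := le_ciSup hbdd (fun _ => 0)
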